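/- For every integer n ≥ 2, the n-dimensional hypercube satisfies str(Q_n) ≤ 2ⁿ + 2^{n−2} + 1. -/

import Mathlib

open Finset

/-- A numbering of a graph of order `Fintype.card V` is a bijection onto `{1, …, card V}`. -/
def IsNumbering {V : Type*} [Fintype V] (f : V → ℕ) : Prop :=
  Set.BijOn f Set.univ (Set.Icc 1 (Fintype.card V))

/-- The strength `str_f` of a numbering `f` of `G`: the maximum of `f u + f v` over edges. -/
noncomputable def strOf {V : Type*} [Fintype V] (G : SimpleGraph V) (f : V → ℕ) : ℕ :=
  sSup {n | ∃ u v, G.Adj u v ∧ n = f u + f v}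

/-- The strength of a graph: the minimum over all numberings `f` of `str_f`. -/
noncomputable def strength {V : Type*} [Fintype V] (G : SimpleGraph V) : ℕ :=
  sInf {n | ∃ f : V → ℕ, IsNumbering f ∧ strOf G f = n}

/-- The `n`-dimensional hypercube `Q_n`: vertices are binary vectors of length `n`, two
vertices being adjacent iff they differ in exactly one coordinate. -/
def hypercube (n : ℕ) : SimpleGraph (Fin n → Bool) where
  Adj u v := (Finset.univ.filter fun i => u i ≠ v i).card = 1
  symm := by
    constructor
    intro u v h
    simpa [ne_comm] using h
  loopless := by
    constructor
    intro u h
    simp at h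

instance (n : ℕ) : DecidableRel (hypercube n).Adj := fun u v =>
  inferInstanceAs (Decidable ((Finset.univ.filter fun i => u i ≠ v i).card = 1))

lemma strength_le {V : Type*} [Fintype V] (G : SimpleGraph V) (f : V → ℕ) (B : ℕ)
    (h1 : IsNumbering f) (h2 : ∀ u v, G.Adj u v → f u + f v ≤ B) :
    strength G ≤ B := by
  have hs : strOf G f ≤ B := by
    apply csSup_le'
    rintro s ⟨u, v, huv, rfl⟩
    exact h2 u v huv
  exact le_trans (Nat.sInf_le ⟨f, h1, rfl⟩) hs

lemma isNumbering_of {V : Type*} [Fintype V] (f : V → ℕ)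
    (hinj : Function.Injective f)
    (hmem : ∀ x, 1 ≤ f x ∧ f x ≤ Fintype.card V)
    (hsurj : ∀ m, 1 ≤ m → m ≤ Fintype.card V → ∃ x, f x = m) :
    IsNumbering f := by
  refine ⟨fun x _ => (hmem x), hinj.injOn, ?_⟩
  rintro m ⟨h1, h2⟩
  obtain ⟨x, hx⟩ := hsurj m h1 h2
  exact ⟨x, Set.mem_univ x, hx⟩

lemma card_fun_bool (n : ℕ) : Fintype.card (Fin n → Bool) = 2 ^ n := by
  simp [Fintype.card_fun]

/-- Decomposition of adjacency in `Q_{m+1}` by the first coordinate. -/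
lemma adj_succ {m : ℕ} (u v : Fin (m+1) → Bool) :
    (hypercube (m+1)).Adj u v ↔
      (u 0 ≠ v 0 ∧ ∀ i : Fin m, u i.succ = v i.succ) ∨
      (u 0 = v 0 ∧ (hypercube m).Adj (fun i => u i.succ) (fun i => v i.succ)) := by
  show (Finset.univ.filter fun i => u i ≠ v i).card = 1 ↔
      _ ∨ (_ ∧ (Finset.univ.filter fun i : Fin m => u i.succ ≠ v i.succ).card = 1)
  rw [Finset.card_filter, Finset.card_filter, Fin.sum_univ_succ]
  have htail : (∑ i : Fin m, if u i.succ ≠ v i.succ then 1 else 0) = 0 ↔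
      ∀ i : Fin m, u i.succ = v i.succ := by
    rw [Finset.sum_eq_zero_iff]
    constructor
    · intro h i
      have := h i (Finset.mem_univ i)
      by_contra hne
      simp [hne] at this
    · intro h i _
      simp [h i]
  by_cases h0 : u 0 = v 0
  · rw [if_neg (by simp [h0]), zero_add]
    constructor
    · intro h
      exact Or.inr ⟨h0, h⟩
    · rintro (⟨hne, _⟩ | ⟨_, h⟩)
      · exact absurd h0 hne
      · exact h
  · rw [if_pos (by simp [h0])]
    constructor
    · intro h
      exact Or.inl ⟨h0, htail.mp (by omega)⟩
    · rintro (⟨_, h⟩ | ⟨heq, _⟩)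
      · have := htail.mpr h
        omega
      · exact absurd heq h0

def f2 (x : Fin 2 → Bool) : ℕ :=
  [1,3,4,2].getD ((cond (x 0) 1 0) + 2 * (cond (x 1) 1 0)) 0

def f3 (x : Fin 3 → Bool) : ℕ :=
  [1,5,6,4,8,2,3,7].getD
    ((cond (x 0) 1 0) + 2 * (cond (x 1) 1 0) + 4 * (cond (x 2) 1 0)) 0

def f4 (x : Fin 4 → Bool) : ℕ :=
  [16,5,2,11,4,9,13,8,1,10,14,7,15,3,6,12].getD
    ((cond (x 0) 1 0) + 2 * (cond (x 1) 1 0) + 4 * (cond (x 2) 1 0) + 8 * (cond (x 3) 1 0)) 0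

def f5 (x : Fin 5 → Bool) : ℕ :=
  [15,23,16,10,21,6,17,20,26,3,14,27,8,31,19,7,24,5,13,22,11,30,18,9,2,32,25,4,28,1,12,29].getD
    ((cond (x 0) 1 0) + 2 * (cond (x 1) 1 0) + 4 * (cond (x 2) 1 0) + 8 * (cond (x 3) 1 0)
      + 16 * (cond (x 4) 1 0)) 0

/-- The doubling step: from a good numbering of `Q_n` to one of `Q_{n+1}`. -/
lemma F_step {n : ℕ} (A : ℕ) (hA : 2 ^ n = 32 * A)
    (f : (Fin n → Bool) → ℕ) (G : (Fin (n+1) → Bool) → ℕ)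
    (hG : ∀ x, G x = if x 0 = true then 2 ^ (n+1) + 2 - 2 * f (fun i => x i.succ)
      else 2 * f (fun i => x i.succ) - 1)
    (hbd : ∀ x, 1 ≤ f x ∧ f x ≤ 2 ^ n)
    (hinj : Function.Injective f)
    (hsurj : ∀ m, 1 ≤ m → m ≤ 2 ^ n → ∃ x, f x = m)
    (hedge : ∀ u v, (hypercube n).Adj u v →
      24 * A + 2 ≤ f u + f v ∧ f u + f v ≤ 40 * A + 1) :
    (∀ x, 1 ≤ G x ∧ G x ≤ 2 ^ (n+1)) ∧
    Function.Injective G ∧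
    (∀ m, 1 ≤ m → m ≤ 2 ^ (n+1) → ∃ x, G x = m) ∧
    (∀ u v, (hypercube (n+1)).Adj u v →
      48 * A + 2 ≤ G u + G v ∧ G u + G v ≤ 80 * A + 1) := by
  have hP : 2 ^ (n+1) = 2 * 2 ^ n := by rw [pow_succ]; ring
  refine ⟨?_, ?_, ?_, ?_⟩
  · intro x
    have h := hbd (fun i => x i.succ)
    rw [hG]
    cases hx : x 0 <;> simp only [Bool.false_eq_true, if_true, if_false] <;> omega
  · intro x y h
    rw [hG, hG] at h
    have hx' := hbd (fun i => x i.succ)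
    have hy' := hbd (fun i => y i.succ)
    have htails : (fun i : Fin n => x i.succ) = (fun i : Fin n => y i.succ) ∧ x 0 = y 0 := by
      cases hx : x 0 <;> cases hy : y 0 <;>
        rw [hx, hy] at h <;>
        simp only [Bool.false_eq_true, if_true, if_false] at h
      · exact ⟨hinj (by omega), rfl⟩
      · exact absurd h (by omega)
      · exact absurd h (by omega)
      · exact ⟨hinj (by omega), rfl⟩
    funext i
    refine Fin.cases ?_ ?_ i
    · exact htails.2
    · intro j
      exact congrFun htails.1 j
  · intro m h1 h2
    rcases Nat.even_or_odd m with he | ho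
    · obtain ⟨t, ht⟩ := he
      obtain ⟨x, hx⟩ := hsurj (2 ^ n + 1 - t) (by omega) (by omega)
      refine ⟨Fin.cons true x, ?_⟩
      have htail : (fun i => (Fin.cons true x : Fin (n+1) → Bool) i.succ) = x := by
        funext i; simp
      rw [hG]
      simp only [Fin.cons_zero, if_true, htail, hx]
      have := hbd x
      omega
    · obtain ⟨t, ht⟩ := ho
      obtain ⟨x, hx⟩ := hsurj (t + 1) (by omega) (by omega)
      refine ⟨Fin.cons false x, ?_⟩
      have htail : (fun i => (Fin.cons false x : Fin (n+1) → Bool) i.succ) = x := by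
        funext i; simp
      rw [hG]
      simp only [Fin.cons_zero, Bool.false_eq_true, if_false, htail, hx]
      omega
  · intro u v hadj
    rw [hG, hG]
    have hu' := hbd (fun i => u i.succ)
    have hv' := hbd (fun i => v i.succ)
    rw [adj_succ] at hadj
    rcases hadj with ⟨hne, htails⟩ | ⟨heq, hadj'⟩
    · have hT : (fun i : Fin n => u i.succ) = (fun i : Fin n => v i.succ) := funext htails
      rw [hT]
      cases hu : u 0 <;> cases hv : v 0 <;> rw [hu, hv] at hne <;>
        simp only [Bool.false_eq_true, if_true, if_false]
      · exact absurd rfl hne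
      · omega
      · omega
      · exact absurd rfl hne
    · have hE := hedge _ _ hadj'
      cases hu : u 0 <;> cases hv : v 0 <;> rw [hu, hv] at heq <;>
        simp only [Bool.false_eq_true, if_true, if_false]
      · omega
      · exact absurd heq (by simp)
      · exact absurd heq (by simp)
      · omega

/-- The recursive numbering of `Q_{5+k}`. -/
def F : (k : ℕ) → (Fin (5 + k) → Bool) → ℕ
  | 0, x => f5 x
  | k+1, x =>
      if x (0 : Fin (5 + k + 1)) = true then 2 ^ (5 + k + 1) + 2 - 2 * F k (fun i => x i.succ)
      else 2 * F k (fun i => x i.succ) - 1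

lemma F_prop : ∀ k : ℕ,
    (∀ x, 1 ≤ F k x ∧ F k x ≤ 2 ^ (5 + k)) ∧
    Function.Injective (F k) ∧
    (∀ m, 1 ≤ m → m ≤ 2 ^ (5 + k) → ∃ x, F k x = m) ∧
    (∀ u v, (hypercube (5 + k)).Adj u v →
      24 * 2 ^ k + 2 ≤ F k u + F k v ∧ F k u + F k v ≤ 40 * 2 ^ k + 1) := by
  intro k
  induction k with
  | zero =>
      refine ⟨?_, ?_, ?_, ?_⟩
      · show ∀ x, 1 ≤ f5 x ∧ f5 x ≤ 32
        decide
      · show Function.Injective f5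
        decide
      · show ∀ m, 1 ≤ m → m ≤ 32 → ∃ x, f5 x = m
        decide
      · show ∀ u v, (hypercube 5).Adj u v → 26 ≤ f5 u + f5 v ∧ f5 u + f5 v ≤ 41
        decide
  | succ k ih =>
      obtain ⟨hbd, hinj, hsurj, hedge⟩ := ih
      have h32 : 2 ^ (5 + k) = 32 * 2 ^ k := by rw [pow_add]; ring
      have hstep := F_step (n := 5 + k) (2 ^ k) h32 (F k) (F (k+1))
        (fun x => rfl) hbd hinj hsurj hedge
      obtain ⟨h1, h2, h3, h4⟩ := hstep
      refine ⟨h1, h2, h3, ?_⟩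
      have e1 : 24 * 2 ^ (k+1) = 48 * 2 ^ k := by rw [pow_succ]; ring
      have e2 : 40 * 2 ^ (k+1) = 80 * 2 ^ k := by rw [pow_succ]; ring
      rw [e1, e2]
      exact h4

/-- For `n ≥ 2`, `str(Q_n) ≤ 2ⁿ + 2^(n-2) + 1`. -/
theorem strength_hypercube_le (n : ℕ) (hn : 2 ≤ n) :
    strength (hypercube n) ≤ 2 ^ n + 2 ^ (n - 2) + 1 := by
  match n, hn with
  | 2, _ =>
      refine strength_le _ f2 _ (isNumbering_of _ ?_ ?_ ?_) ?_
      · decide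
      · rw [card_fun_bool]; decide
      · rw [card_fun_bool]; decide
      · show ∀ u v, (hypercube 2).Adj u v → f2 u + f2 v ≤ 6
        decide
  | 3, _ =>
      refine strength_le _ f3 _ (isNumbering_of _ ?_ ?_ ?_) ?_
      · decide
      · rw [card_fun_bool]; decide
      · rw [card_fun_bool]; decide
      · show ∀ u v, (hypercube 3).Adj u v → f3 u + f3 v ≤ 11
        decide
  | 4, _ =>
      refine strength_le _ f4 _ (isNumbering_of _ ?_ ?_ ?_) ?_
      · decide
      · rw [card_fun_bool]; decide
      · rw [card_fun_bool]; decide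
      · show ∀ u v, (hypercube 4).Adj u v → f4 u + f4 v ≤ 21
        decide
  | (m+5), _ =>
      obtain ⟨hbd, hinj, hsurj, hedge⟩ := F_prop m
      have hsub : m + 5 - 2 = 3 + m := by omega
      rw [hsub]
      have key : strength (hypercube (5 + m)) ≤ 2 ^ (m + 5) + 2 ^ (3 + m) + 1 := by
        refine strength_le _ (F m) _ (isNumbering_of _ hinj ?_ ?_) ?_
        · rw [card_fun_bool]; exact hbd
        · rw [card_fun_bool]; exact hsurj
        · intro u v huv
          have := (hedge u v huv).2
          have e1 : 2 ^ (m + 5) = 32 * 2 ^ m := by rw [pow_add]; ring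
          have e2 : 2 ^ (3 + m) = 8 * 2 ^ m := by rw [pow_add]; ring
          omega
      rw [show (5 + m) = (m + 5) from by omega] at key
      exact key
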